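/- Let E and E' be elliptic curves over a field k of characteristic 0, n a positive integer, φ: E → E' a cyclic k-isogeny of degree d, and m = gcd(d,n). Then there is a short exact sequence of Galois modules 0 → Hom(φ(E_m), E'_m) → Hom(E_n, E'_n) → H → 0, where the first map is f ↦ f∘φ∘[n/m], the second is g ↦ g∘φ^∨, and H = {f ∈ End(E'_n) : f∘φ∘[n/m] = 0}. -/

import Mathlib

/-- The `n`-torsion subgroup of an abelian group. -/
def nTorsion (n : ℕ) (A : Type) [AddCommGroup A] : AddSubgroup A where
  carrier := {x | n • x = 0}
  zero_mem' := by simp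
  add_mem' := by
    intro a b ha hb
    simp only [Set.mem_setOf_eq] at *
    rw [smul_add, ha, hb, add_zero]
  neg_mem' := by
    intro a ha
    simp only [Set.mem_setOf_eq] at *
    rw [smul_neg, ha, neg_zero]

/-- Restriction of a homomorphism to subgroups which it respects. -/
def restrictHom {A B : Type} [AddCommGroup A] [AddCommGroup B] (g : A →+ B)
    (S : AddSubgroup A) (T : AddSubgroup B) (h : ∀ x ∈ S, g x ∈ T) : S →+ T where
  toFun x := ⟨g x, h x x.2⟩
  map_zero' := Subtype.ext (by simp)
  map_add' a b := Subtype.ext (by simp)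

/-- The restriction of a group homomorphism to `n`-torsion subgroups. -/
def torsMap {A B : Type} [AddCommGroup A] [AddCommGroup B] (n : ℕ) (g : A →+ B) :
    nTorsion n A →+ nTorsion n B :=
  restrictHom g (nTorsion n A) (nTorsion n B) (by
    intro x hx
    show n • g x = 0
    rw [← map_nsmul, show n • x = 0 from hx, map_zero])


section AuxLemmas
variable {A B C : Type} [AddCommGroup A] [AddCommGroup B] [AddCommGroup C]

theorem descHom_key (p : A →+ B) (g : A →+ C)
    (h0 : ∀ a, p a = 0 → g a = 0) {a a' : A} (h : p a = p a') : g a = g a' := by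
  have h1 : p (a - a') = 0 := by rw [map_sub, h, sub_self]
  have h2 := h0 _ h1
  rw [map_sub] at h2
  exact sub_eq_zero.mp h2

/-- Descend a homomorphism along a surjection whose "kernel" it kills. -/
noncomputable def descHom (p : A →+ B) (hp : Function.Surjective p) (g : A →+ C)
    (h0 : ∀ a, p a = 0 → g a = 0) : B →+ C where
  toFun b := g (hp b).choose
  map_zero' := h0 _ ((hp 0).choose_spec)
  map_add' b₁ b₂ := by
    show g (hp (b₁ + b₂)).choose = g (hp b₁).choose + g (hp b₂).choose
    rw [← map_add]
    exact (descHom_key p g h0 (by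
      rw [map_add, (hp b₁).choose_spec, (hp b₂).choose_spec, (hp (b₁ + b₂)).choose_spec])).symm

theorem descHom_spec (p : A →+ B) (hp : Function.Surjective p) (g : A →+ C)
    (h0 : ∀ a, p a = 0 → g a = 0) (a : A) : descHom p hp g h0 (p a) = g a :=
  descHom_key p g h0 ((hp (p a)).choose_spec)

/-- In a cyclic group of order `r * s`, any element killed by `s` is divisible by `r`. -/
theorem cyc_div (φ : A →+ B) (d : ℕ) (hd : 0 < d) (hφker : Nat.card φ.ker = d)
    (hφcyc : IsAddCyclic φ.ker) {r s : ℕ} (hrs : r * s = d)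
    (u : φ.ker) (hu : s • u = 0) : ∃ c : φ.ker, u = r • c := by
  obtain ⟨g, hg⟩ := hφcyc.exists_generator
  have hord : addOrderOf g = d := by rw [addOrderOf_eq_card_of_forall_mem_zmultiples hg, hφker]
  obtain ⟨kk, hk⟩ := AddSubgroup.mem_zmultiples_iff.mp (hg u)
  have hs : s ≠ 0 := by rintro rfl; omega
  have h1 : ((s : ℤ) * kk) • g = 0 := by
    rw [mul_smul, natCast_zsmul, hk, hu]
  have h2 : (d : ℤ) ∣ (s : ℤ) * kk := by
    have := addOrderOf_dvd_iff_zsmul_eq_zero.mpr h1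
    rwa [hord] at this
  have h3 : (r : ℤ) ∣ kk := by
    obtain ⟨t, ht⟩ := h2
    refine ⟨t, ?_⟩
    have hcast : (d : ℤ) = (r : ℤ) * (s : ℤ) := by exact_mod_cast hrs.symm
    rw [hcast] at ht
    have : (s : ℤ) * kk = (s : ℤ) * ((r : ℤ) * t) := by ring_nf; ring_nf at ht; linarith
    exact mul_left_cancel₀ (by exact_mod_cast hs) this
  obtain ⟨j, hj⟩ := h3
  refine ⟨j • g, ?_⟩
  rw [← hk, hj, mul_smul, natCast_zsmul]

end AuxLemmas

section Isogeny
variable {E E' : Type} [AddCommGroup E] [AddCommGroup E']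

theorem lemA (φ : E →+ E') (φdual : E' →+ E) (d n : ℕ) (hd : 0 < d) (hn : 0 < n)
    (hdivE : ∀ m : ℕ, 0 < m → Function.Surjective fun x : E => m • x)
    (hφker : Nat.card φ.ker = d) (hφcyc : IsAddCyclic φ.ker)
    (hdual₁ : φdual.comp φ = d • AddMonoidHom.id E)
    (x : E) (hx : n • x = 0) (hphix : (n / Nat.gcd d n) • φ x = 0) :
    ∃ y : E', n • y = 0 ∧ φdual y = x := by
  set m := Nat.gcd d n with hmdef
  have hm : 0 < m := Nat.gcd_pos_of_pos_left n hd
  have hmd : m ∣ d := Nat.gcd_dvd_left d n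
  have hmn : m ∣ n := Nat.gcd_dvd_right d n
  have hdualphi : ∀ z : E, φdual (φ z) = d • z := by
    intro z
    have := DFunLike.congr_fun hdual₁ z
    simpa using this
  obtain ⟨w₀, hw₀'⟩ := hdivE d hd x
  have hw₀ : d • w₀ = x := hw₀'
  have harith : (d / m) * n = (n / m) * d := by
    apply Nat.eq_of_mul_eq_mul_right hm
    rw [mul_right_comm, Nat.div_mul_cancel hmd, mul_right_comm, Nat.div_mul_cancel hmn, mul_comm]
  have hkeru : φ ((d / m) • (n • w₀)) = 0 := by
    rw [map_nsmul, map_nsmul, ← mul_smul, harith, mul_smul, ← map_nsmul φ d w₀, hw₀]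
    exact hphix
  have humem : (d / m) • (n • w₀) ∈ φ.ker := hkeru
  have hmu : m • (⟨_, humem⟩ : φ.ker) = 0 := by
    apply Subtype.ext
    push_cast
    rw [← mul_smul, Nat.mul_div_cancel' hmd, smul_comm, hw₀, hx]
  obtain ⟨c, hc⟩ := cyc_div φ d hd hφker hφcyc (Nat.div_mul_cancel hmd) ⟨_, humem⟩ hmu
  have hcval : (d / m) • (n • w₀) = (d / m) • (c : E) := by
    have := congrArg Subtype.val hc
    push_cast at this
    exact this
  set w'' := n • w₀ - (c : E) with hw''def
  have hdmw'' : (d / m) • w'' = 0 := by rw [hw''def, smul_sub, hcval, sub_self]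
  have hφw'' : φ w'' = n • φ w₀ := by
    rw [hw''def, map_sub, map_nsmul, (show φ (c : E) = 0 from c.2), sub_zero]
  have hco : Nat.Coprime (n / m) (d / m) := (Nat.coprime_div_gcd_div_gcd hm).symm
  set a := Nat.gcdA (n / m) (d / m) with hadef
  set b := Nat.gcdB (n / m) (d / m) with hbdef
  have hbez : ((n / m : ℕ) : ℤ) * a + ((d / m : ℕ) : ℤ) * b = 1 := by
    have h1 := Nat.gcd_eq_gcd_ab (n / m) (d / m)
    rw [Nat.Coprime] at hco
    rw [hco] at h1
    exact_mod_cast h1.symm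
  obtain ⟨t, ht'⟩ := hdivE m hm (a • w'')
  have ht : m • t = a • w'' := ht'
  have hzdm : ((d / m : ℕ) : ℤ) • w'' = 0 := by rw [natCast_zsmul, hdmw'']
  have hnt : n • t = w'' := by
    have e1 : (n : ℤ) = ((n / m : ℕ) : ℤ) * (m : ℤ) := by
      exact_mod_cast (Nat.div_mul_cancel hmn).symm
    calc n • t = (n : ℤ) • t := (natCast_zsmul t n).symm
    _ = (((n / m : ℕ) : ℤ) * (m : ℤ)) • t := by rw [← e1]
    _ = ((n / m : ℕ) : ℤ) • ((m : ℤ) • t) := mul_smul _ _ _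
    _ = ((n / m : ℕ) : ℤ) • (a • w'') := by rw [natCast_zsmul t m, ht]
    _ = (((n / m : ℕ) : ℤ) * a) • w'' := (mul_smul _ _ _).symm
    _ = (1 - ((d / m : ℕ) : ℤ) * b) • w'' := by
        rw [show ((n / m : ℕ) : ℤ) * a = 1 - ((d / m : ℕ) : ℤ) * b by linarith]
    _ = w'' - (((d / m : ℕ) : ℤ) * b) • w'' := by rw [sub_smul, one_smul]
    _ = w'' := by rw [mul_comm, mul_smul, hzdm, smul_zero, sub_zero]
  have hdt : d • t = 0 := by
    have e1 : (d : ℤ) = ((d / m : ℕ) : ℤ) * (m : ℤ) := by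
      exact_mod_cast (Nat.div_mul_cancel hmd).symm
    calc d • t = (d : ℤ) • t := (natCast_zsmul t d).symm
    _ = ((d / m : ℕ) : ℤ) • ((m : ℤ) • t) := by rw [e1, mul_smul]
    _ = ((d / m : ℕ) : ℤ) • (a • w'') := by rw [natCast_zsmul t m, ht]
    _ = a • (((d / m : ℕ) : ℤ) • w'') := smul_comm _ _ _
    _ = 0 := by rw [hzdm, smul_zero]
  refine ⟨φ w₀ - φ t, ?_, ?_⟩
  · rw [smul_sub, ← map_nsmul φ n t, hnt, hφw'']
    exact sub_self _
  · rw [map_sub, hdualphi, hdualphi, hw₀, hdt, sub_zero]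

theorem lemB (φ : E →+ E') (φdual : E' →+ E) (d n : ℕ) (hd : 0 < d) (hn : 0 < n)
    (hφsurj : Function.Surjective φ)
    (hφker : Nat.card φ.ker = d) (hφcyc : IsAddCyclic φ.ker)
    (hdual₁ : φdual.comp φ = d • AddMonoidHom.id E)
    (hdual₂ : φ.comp φdual = d • AddMonoidHom.id E')
    (y : E') (hy : n • y = 0) (hdy : φdual y = 0) :
    ∃ w : E, Nat.gcd d n • w = 0 ∧ φ w = y := by
  set m := Nat.gcd d n with hmdef
  have hm : 0 < m := Nat.gcd_pos_of_pos_left n hd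
  have hmd : m ∣ d := Nat.gcd_dvd_left d n
  have hdualphi : ∀ z : E, φdual (φ z) = d • z := by
    intro z
    have := DFunLike.congr_fun hdual₁ z
    simpa using this
  have hphidual : ∀ z : E', φ (φdual z) = d • z := by
    intro z
    have := DFunLike.congr_fun hdual₂ z
    simpa using this
  obtain ⟨w₀, hφw₀⟩ := hφsurj y
  have hdw₀ : d • w₀ = 0 := by rw [← hdualphi, hφw₀, hdy]
  have hdy' : d • y = 0 := by rw [← hphidual, hdy, map_zero]
  have hmy : m • y = 0 := by
    have hb := Nat.gcd_eq_gcd_ab d n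
    calc m • y = ((m : ℕ) : ℤ) • y := (natCast_zsmul y m).symm
    _ = ((d : ℤ) * Nat.gcdA d n + (n : ℤ) * Nat.gcdB d n) • y := by rw [hmdef, hb]
    _ = ((d : ℤ) * Nat.gcdA d n) • y + ((n : ℤ) * Nat.gcdB d n) • y := add_smul _ _ _
    _ = Nat.gcdA d n • ((d : ℤ) • y) + Nat.gcdB d n • ((n : ℤ) • y) := by
        rw [mul_comm (d : ℤ), mul_comm (n : ℤ), mul_smul, mul_smul]
    _ = 0 := by
        rw [natCast_zsmul, natCast_zsmul, hdy', hy, smul_zero, smul_zero, add_zero]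
  have humem : m • w₀ ∈ φ.ker := by
    have : φ (m • w₀) = 0 := by rw [map_nsmul, hφw₀, hmy]
    exact this
  have hsu : (d / m) • (⟨m • w₀, humem⟩ : φ.ker) = 0 := by
    apply Subtype.ext
    push_cast
    rw [← mul_smul, Nat.div_mul_cancel hmd, hdw₀]
  obtain ⟨c, hc⟩ := cyc_div φ d hd hφker hφcyc (Nat.mul_div_cancel' hmd) _ hsu
  have hcval : m • w₀ = m • (c : E) := by
    have := congrArg Subtype.val hc
    push_cast at this
    exact this
  refine ⟨w₀ - (c : E), ?_, ?_⟩
  · rw [smul_sub, hcval, sub_self]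
  · rw [map_sub, (show φ (c : E) = 0 from c.2), sub_zero, hφw₀]

end Isogeny

/-- Let `E` and `E'` be elliptic curves over a field `k` of characteristic
`0` — modelled on their geometric points: divisible abelian groups with `m`-torsion of order
`m²`, endowed with an action of the absolute Galois group `Γ` — let `n` be a positive integer,
`φ : E → E'` a cyclic `k`-isogeny of degree `d` (so `φ` and its dual `φ^∨` are
Galois-equivariant), and `m = gcd(d, n)`.  Then there is a short exact sequence of Galois
modules `0 → Hom(φ(E_m), E'_m) → Hom(E_n, E'_n) → H → 0`, where the first map `α` is
`f ↦ f ∘ φ ∘ [n/m]`, the second map `β` is `g ↦ g ∘ φ^∨`, and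
`H = {f ∈ End(E'_n) : f ∘ φ ∘ [n/m] = 0}`: i.e. `α` is injective, the image of `α` is the
kernel of `β`, the image of `β` is exactly `H`, and `α` and `β` commute with the (conjugation)
Galois actions. -/
theorem galois_ses_of_torsion_homs
    (k : Type) [Field k] [CharZero k]
    (Γ : Type) [Group Γ]
    (E E' : Type) [AddCommGroup E] [AddCommGroup E']
    (ρ : Γ →* Multiplicative (AddAut E)) (ρ' : Γ →* Multiplicative (AddAut E'))
    (hdivE : ∀ m : ℕ, 0 < m → Function.Surjective fun x : E => m • x)
    (hdivE' : ∀ m : ℕ, 0 < m → Function.Surjective fun x : E' => m • x)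
    (htorsE : ∀ m : ℕ, 0 < m → Nat.card (nTorsion m E) = m ^ 2)
    (htorsE' : ∀ m : ℕ, 0 < m → Nat.card (nTorsion m E') = m ^ 2)
    (d : ℕ) (hd : 0 < d)
    (φ : E →+ E') (hφsurj : Function.Surjective φ)
    (hφker : Nat.card φ.ker = d) (hφcyc : IsAddCyclic φ.ker)
    (φdual : E' →+ E)
    (hdual₁ : φdual.comp φ = d • AddMonoidHom.id E)
    (hdual₂ : φ.comp φdual = d • AddMonoidHom.id E')
    (hρφ : ∀ σ : Γ, ∀ x : E, φ ((ρ σ : E ≃+ E) x) = (ρ' σ : E' ≃+ E') (φ x))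
    (hρφd : ∀ σ : Γ, ∀ y : E', φdual ((ρ' σ : E' ≃+ E') y) = (ρ σ : E ≃+ E) (φdual y))
    (n : ℕ) (hn : 0 < n)
    (hstab : ∀ σ : Γ, ∀ y ∈ (nTorsion (Nat.gcd d n) E).map φ,
      (ρ' σ : E' ≃+ E') y ∈ (nTorsion (Nat.gcd d n) E).map φ) :
    let m := Nat.gcd d n
    -- the inclusion `E'_m ⊆ E'_n`
    let incl : nTorsion m E' →+ nTorsion n E' := AddSubgroup.inclusion (by
      intro y hy
      show n • y = 0
      rw [← Nat.div_mul_cancel (Nat.gcd_dvd_right d n), mul_smul,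
        show Nat.gcd d n • y = 0 from hy, smul_zero])
    -- the map `φ ∘ [n/m] : E_n → φ(E_m)`
    let phiRes : nTorsion n E →+ ((nTorsion m E).map φ) :=
      restrictHom ((n / m) • φ) (nTorsion n E) ((nTorsion m E).map φ) (by
        intro x hx
        refine AddSubgroup.mem_map.2 ⟨(n / m) • x, ?_, ?_⟩
        · show Nat.gcd d n • ((n / Nat.gcd d n) • x) = 0
          rw [← mul_smul, Nat.mul_div_cancel' (Nat.gcd_dvd_right d n)]
          exact hx
        · simp)
    -- the map `φ ∘ [n/m] : E_n → E'_n`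
    let phiLow : nTorsion n E →+ nTorsion n E' := torsMap n ((n / m) • φ)
    -- the first map of the sequence, `α : f ↦ f ∘ φ ∘ [n/m]`
    let α : (((nTorsion m E).map φ) →+ nTorsion m E') → (nTorsion n E →+ nTorsion n E') :=
      fun f => incl.comp (f.comp phiRes)
    -- the second map of the sequence, `β : g ↦ g ∘ φ^∨`
    let β : (nTorsion n E →+ nTorsion n E') → (nTorsion n E' →+ nTorsion n E') :=
      fun g => g.comp (torsMap n φdual)
    Function.Injective α ∧
    (∀ g : nTorsion n E →+ nTorsion n E', β g = 0 ↔ ∃ f, α f = g) ∧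
    (∀ h : nTorsion n E' →+ nTorsion n E', (∃ g, β g = h) ↔ h.comp phiLow = 0) ∧
    (∀ (σ : Γ) (f : ((nTorsion m E).map φ) →+ nTorsion m E'),
      α ((torsMap m (ρ' σ : E' ≃+ E').toAddMonoidHom).comp
          (f.comp (restrictHom (ρ' σ⁻¹ : E' ≃+ E').toAddMonoidHom _ _ (hstab σ⁻¹))))
        = (torsMap n (ρ' σ : E' ≃+ E').toAddMonoidHom).comp
            ((α f).comp (torsMap n (ρ σ⁻¹ : E ≃+ E).toAddMonoidHom))) ∧
    (∀ (σ : Γ) (g : nTorsion n E →+ nTorsion n E'),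
      β ((torsMap n (ρ' σ : E' ≃+ E').toAddMonoidHom).comp
          (g.comp (torsMap n (ρ σ⁻¹ : E ≃+ E).toAddMonoidHom)))
        = (torsMap n (ρ' σ : E' ≃+ E').toAddMonoidHom).comp
            ((β g).comp (torsMap n (ρ' σ⁻¹ : E' ≃+ E').toAddMonoidHom))) := by
  intro m incl phiRes phiLow α β
  have hm : 0 < m := Nat.gcd_pos_of_pos_left n hd
  have hmd : m ∣ d := Nat.gcd_dvd_left d n
  have hmn : m ∣ n := Nat.gcd_dvd_right d n
  have hnm : 0 < n / m := Nat.div_pos (Nat.le_of_dvd hn hmn) hm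
  have harith : (n / m) * d = (d / m) * n := by
    apply Nat.eq_of_mul_eq_mul_right hm
    rw [mul_right_comm, Nat.div_mul_cancel hmn, mul_right_comm, Nat.div_mul_cancel hmd, mul_comm]
  have hdualphi : ∀ z : E, φdual (φ z) = d • z := by
    intro z
    have := DFunLike.congr_fun hdual₁ z
    simpa using this
  have hphidual : ∀ z : E', φ (φdual z) = d • z := by
    intro z
    have := DFunLike.congr_fun hdual₂ z
    simpa using this
  have hPsurj : Function.Surjective phiRes := by
    rintro ⟨v, hv⟩
    obtain ⟨t, ht, rfl⟩ := AddSubgroup.mem_map.mp hv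
    obtain ⟨x, hx'⟩ := hdivE (n / m) hnm t
    have hx : (n / m) • x = t := hx'
    have hxn : x ∈ nTorsion n E := by
      show n • x = 0
      rw [← Nat.mul_div_cancel' hmn, mul_smul, hx]
      exact ht
    exact ⟨⟨x, hxn⟩, Subtype.ext (by
      show ((n / m) • φ) x = φ t
      rw [AddMonoidHom.smul_apply, ← map_nsmul φ (n / m) x, hx])⟩
  have hPker : ∀ x : nTorsion n E, phiRes x = 0 → ∃ y : E', n • y = 0 ∧ φdual y = x.val := by
    intro x hx
    have h1 : ((n / m) • φ) x.val = 0 := congrArg Subtype.val hx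
    rw [AddMonoidHom.smul_apply] at h1
    exact lemA φ φdual d n hd hn hdivE hφker hφcyc hdual₁ x.val x.2 h1
  refine ⟨?_, ?_, ?_, ?_, ?_⟩
  · -- injectivity of α
    intro f f' hff
    ext v
    obtain ⟨x, rfl⟩ := hPsurj v
    have h1 : incl (f (phiRes x)) = incl (f' (phiRes x)) := DFunLike.congr_fun hff x
    exact congrArg Subtype.val (AddSubgroup.inclusion_injective _ h1)
  · -- exactness at the middle
    intro g
    constructor
    · intro hβg
      have hβg' : ∀ y : nTorsion n E', g (torsMap n φdual y) = 0 := by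
        intro y
        have h2 : (β g) y = 0 := by rw [hβg]; rfl
        exact h2
      have hgker : ∀ x : nTorsion n E, phiRes x = 0 → g x = 0 := by
        intro x hx
        obtain ⟨y, hny, hyx⟩ := hPker x hx
        have hxy : x = torsMap n φdual ⟨y, hny⟩ := Subtype.ext (by
          show x.val = φdual y
          exact hyx.symm)
        rw [hxy]
        exact hβg' ⟨y, hny⟩
      have hM : ∀ v : (nTorsion m E).map φ, m • v = 0 := by
        rintro ⟨v, hv⟩
        obtain ⟨t, ht, rfl⟩ := AddSubgroup.mem_map.mp hv
        apply Subtype.ext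
        push_cast
        rw [← map_nsmul φ m t, (show m • t = 0 from ht), map_zero]
      have hgm : ∀ x : nTorsion n E, m • g x = 0 := by
        intro x
        have h1 : phiRes (m • x) = 0 := by
          rw [map_nsmul]
          exact hM (phiRes x)
        rw [← map_nsmul g m x]
        exact hgker (m • x) h1
      let f₀ : nTorsion n E →+ nTorsion m E' :=
        { toFun := fun x => ⟨(g x).val, by
            show m • (g x).val = 0
            have h2 := congrArg Subtype.val (hgm x)
            push_cast at h2
            exact h2⟩
          map_zero' := Subtype.ext (by simp)
          map_add' := fun u v => Subtype.ext (by simp) }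
      have h0f : ∀ x, phiRes x = 0 → f₀ x = 0 := fun x hx => Subtype.ext (by
        show (g x).val = 0
        rw [hgker x hx]
        rfl)
      refine ⟨descHom phiRes hPsurj f₀ h0f, ?_⟩
      ext x
      show (incl (descHom phiRes hPsurj f₀ h0f (phiRes x))).val = (g x).val
      rw [descHom_spec]
      rfl
    · rintro ⟨f, rfl⟩
      ext y
      show (incl (f (phiRes (torsMap n φdual y)))).val = ((0 : nTorsion n E' →+ nTorsion n E') y).val
      have h1 : phiRes (torsMap n φdual y) = 0 := by
        apply Subtype.ext
        show ((n / m) • φ) (φdual y.val) = 0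
        rw [AddMonoidHom.smul_apply, hphidual y.val, ← mul_smul, harith, mul_smul,
          (show n • y.val = 0 from y.2), smul_zero]
      rw [h1, map_zero, map_zero]
      rfl
  · -- image of β
    intro h
    constructor
    · rintro ⟨g, rfl⟩
      ext x
      show (g (torsMap n φdual (phiLow x))).val = ((0 : nTorsion n E →+ nTorsion n E') x).val
      have h1 : torsMap n φdual (phiLow x) = 0 := by
        apply Subtype.ext
        show φdual (((n / m) • φ) x.val) = 0
        rw [AddMonoidHom.smul_apply, map_nsmul, hdualphi x.val, ← mul_smul, harith, mul_smul,
          (show n • x.val = 0 from x.2), smul_zero]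
      rw [h1, map_zero]
      rfl
    · intro hh
      have hh' : ∀ x : nTorsion n E, h (phiLow x) = 0 := by
        intro x
        have h2 : (h.comp phiLow) x = 0 := by rw [hh]; rfl
        exact h2
      have h0 : ∀ y : nTorsion n E', torsMap n φdual y = 0 → h y = 0 := by
        intro y hy
        have hyv : φdual y.val = 0 := congrArg Subtype.val hy
        obtain ⟨w, hw, hphiw⟩ :=
          lemB φ φdual d n hd hn hφsurj hφker hφcyc hdual₁ hdual₂ y.val y.2 hyv
        obtain ⟨x, hx'⟩ := hdivE (n / m) hnm w
        have hx : (n / m) • x = w := hx'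
        have hxn : x ∈ nTorsion n E := by
          show n • x = 0
          rw [← Nat.mul_div_cancel' hmn, mul_smul, hx]
          exact hw
        have hyx : y = phiLow ⟨x, hxn⟩ := Subtype.ext (by
          show y.val = ((n / m) • φ) x
          rw [AddMonoidHom.smul_apply, ← map_nsmul φ (n / m) x, hx, hphiw])
        rw [hyx]
        exact hh' ⟨x, hxn⟩
      haveI hdivN : DivisibleBy E' ℕ := divisibleByOfSMulRightSurj E' ℕ (fun {k} hk => by
        have h3 := hdivE' k (Nat.pos_of_ne_zero hk)
        exact h3)
      haveI hdivZ : DivisibleBy E' ℤ := AddGroup.divisibleByIntOfDivisibleByNat E'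
      have baer : Module.Baer ℤ E' := Module.Baer.of_divisible E'
      have hrs : Function.Surjective (torsMap n φdual).rangeRestrict :=
        AddMonoidHom.rangeRestrict_surjective (torsMap n φdual)
      have h0' : ∀ y, (torsMap n φdual).rangeRestrict y = 0 →
          ((nTorsion n E').subtype.comp h) y = 0 := by
        intro y hy
        have h4 : torsMap n φdual y = 0 := congrArg Subtype.val hy
        show (h y).val = 0
        rw [h0 y h4]
        rfl
      obtain ⟨Ψ, hΨ⟩ := baer.extension_property_addMonoidHom (torsMap n φdual).range.subtype
        (AddSubgroup.subtype_injective _)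
        (descHom (torsMap n φdual).rangeRestrict hrs ((nTorsion n E').subtype.comp h) h0')
      refine ⟨{ toFun := fun x => ⟨Ψ x, by
                  show n • Ψ x = 0
                  rw [← map_nsmul Ψ n x,
                    (show (n • x : nTorsion n E) = 0 from Subtype.ext (by
                      push_cast
                      exact x.2)), map_zero]⟩
                map_zero' := Subtype.ext (by simp)
                map_add' := fun u v => Subtype.ext (by simp) }, ?_⟩
      ext y
      show Ψ (torsMap n φdual y) = (h y).val
      have e1 : torsMap n φdual y =
          (torsMap n φdual).range.subtype ((torsMap n φdual).rangeRestrict y) := rfl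
      rw [e1, ← AddMonoidHom.comp_apply, hΨ]
      exact descHom_spec (torsMap n φdual).rangeRestrict hrs ((nTorsion n E').subtype.comp h) h0' y
  · -- Galois equivariance of α
    intro σ f
    ext x
    have key : restrictHom (ρ' σ⁻¹ : E' ≃+ E').toAddMonoidHom ((nTorsion m E).map φ)
          ((nTorsion m E).map φ) (hstab σ⁻¹) (phiRes x)
        = phiRes (torsMap n (ρ σ⁻¹ : E ≃+ E).toAddMonoidHom x) := by
      apply Subtype.ext
      show (ρ' σ⁻¹ : E' ≃+ E').toAddMonoidHom (((n / m) • φ) x.val)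
          = ((n / m) • φ) ((ρ σ⁻¹ : E ≃+ E).toAddMonoidHom x.val)
      simp only [AddEquiv.coe_toAddMonoidHom, AddMonoidHom.smul_apply]
      rw [map_nsmul]
      exact congrArg ((n / m) • ·) (hρφ σ⁻¹ x.val).symm
    show ((ρ' σ : E' ≃+ E').toAddMonoidHom
        ((f (restrictHom (ρ' σ⁻¹ : E' ≃+ E').toAddMonoidHom ((nTorsion m E).map φ)
          ((nTorsion m E).map φ) (hstab σ⁻¹) (phiRes x))).val) : E')
      = (ρ' σ : E' ≃+ E').toAddMonoidHom
          ((f (phiRes (torsMap n (ρ σ⁻¹ : E ≃+ E).toAddMonoidHom x))).val)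
    rw [key]
  · -- Galois equivariance of β
    intro σ g
    ext y
    have key : torsMap n (ρ σ⁻¹ : E ≃+ E).toAddMonoidHom (torsMap n φdual y)
        = torsMap n φdual (torsMap n (ρ' σ⁻¹ : E' ≃+ E').toAddMonoidHom y) := by
      apply Subtype.ext
      show (ρ σ⁻¹ : E ≃+ E).toAddMonoidHom (φdual y.val)
          = φdual ((ρ' σ⁻¹ : E' ≃+ E').toAddMonoidHom y.val)
      exact (hρφd σ⁻¹ y.val).symm
    show ((ρ' σ : E' ≃+ E').toAddMonoidHom
        ((g (torsMap n (ρ σ⁻¹ : E ≃+ E).toAddMonoidHom (torsMap n φdual y))).val) : E')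
      = (ρ' σ : E' ≃+ E').toAddMonoidHom
          ((g (torsMap n φdual (torsMap n (ρ' σ⁻¹ : E' ≃+ E').toAddMonoidHom y))).val)
    rw [key]
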